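/- Let W be as in the context. Then for every t ∈ (0,T) and every x ∈ H with ⟨α,x⟩ = 0, the subdifferential of W at (t,x) is empty: D^{1,-}W(t,x) = ∅. -/

import Mathlib

open scoped InnerProductSpace

/-- `G(t) = ∫_t^T e^{λ(s−t)} ds`. -/
noncomputable def Gfun (T lam : ℝ) (t : ℝ) : ℝ := ∫ s in t..T, Real.exp (lam * (s - t))

/-- The glued candidate value function of the example of Section 3.1:
`W(t,x) = −G(t)|⟨α,x⟩| − ∫_t^T (1/2)⟨β,α⟩² G(s)² ds`. -/
noncomputable def Wfun {H : Type*} [NormedAddCommGroup H] [InnerProductSpace ℝ H]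
    (T lam : ℝ) (α β : H) (t : ℝ) (x : H) : ℝ :=
  -(Gfun T lam t * |⟪α, x⟫_ℝ|) - ∫ s in t..T, (1 / 2) * ⟪β, α⟫_ℝ ^ 2 * (Gfun T lam s) ^ 2

/-- The subdifferential `D^{1,-}v(t,x)` of a function `v : (0,T) × H → ℝ` at `(t,x)`:
pairs `(a,p) ∈ ℝ × H` such that
`v(s,y) − v(t,x) − ⟨p, y−x⟩ − a(s−t) ≥ o(‖y−x‖ + |s−t|)` as `(s,y) → (t,x)`. -/
def subDiff {H : Type*} [NormedAddCommGroup H] [InnerProductSpace ℝ H]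
    (T : ℝ) (v : ℝ → H → ℝ) (t : ℝ) (x : H) : Set (ℝ × H) :=
  { ap : ℝ × H | ∀ δ > (0 : ℝ), ∃ η > (0 : ℝ), ∀ s ∈ Set.Ioo (0 : ℝ) T, ∀ y : H,
      |s - t| < η → ‖y - x‖ < η →
        -(δ * (‖y - x‖ + |s - t|)) ≤ v s y - v t x - ⟪ap.2, y - x⟫_ℝ - ap.1 * (s - t) }

lemma Gfun_pos (T lam t : ℝ) (h : t < T) : 0 < Gfun T lam t := by
  apply intervalIntegral.intervalIntegral_pos_of_pos_on
  · exact Continuous.intervalIntegrable (by continuity) _ _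
  · exact fun s _ => Real.exp_pos _
  · exact h

/-- On the hyperplane `⟨α,x⟩ = 0`, the subdifferential of `W` at `(t,x)` is empty. -/
theorem subdiff_of_W_empty
    {H : Type*} [NormedAddCommGroup H] [InnerProductSpace ℝ H] [CompleteSpace H]
    [TopologicalSpace.SeparableSpace H]
    (T lam : ℝ) (hT : 0 < T) (α β : H) (hα : α ≠ 0)
    (t : ℝ) (ht : t ∈ Set.Ioo (0 : ℝ) T) (x : H) (hx : ⟪α, x⟫_ℝ = 0) :
    subDiff T (Wfun T lam α β) t x = ∅ := by
  ext ap
  simp only [Set.mem_empty_iff_false, iff_false]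
  intro hmem
  set G := Gfun T lam t with hG
  have hGpos : 0 < G := Gfun_pos T lam t ht.2
  have hαpos : (0:ℝ) < ‖α‖ := norm_pos_iff.mpr hα
  have hδpos : 0 < G * ‖α‖ / 2 := by positivity
  obtain ⟨η, hη, hineq⟩ := hmem (G * ‖α‖ / 2) hδpos
  set ε := η / (2 * ‖α‖) with hε
  have hεpos : 0 < ε := by positivity
  have key : ∀ c : ℝ, Wfun T lam α β t (x + c • α) - Wfun T lam α β t x
      = -(G * (|c| * ‖α‖ ^ 2)) := by
    intro c
    simp only [Wfun, hx, inner_add_right, real_inner_smul_right,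
      real_inner_self_eq_norm_sq, abs_zero, mul_zero, neg_zero, zero_add,
      abs_mul, abs_of_nonneg (sq_nonneg ‖α‖), ← hG]
    ring
  have hsub : ∀ c : ℝ, (x + c • α) - x = c • α := fun c => add_sub_cancel_left x _
  have hnrm : ∀ c : ℝ, ‖(x + c • α) - x‖ = |c| * ‖α‖ := by
    intro c; rw [hsub, norm_smul, Real.norm_eq_abs]
  have hsmall : ε * ‖α‖ < η := by
    rw [hε, div_mul_eq_mul_div]
    rw [div_lt_iff₀ (by positivity)]
    nlinarith
  have htt : |t - t| < η := by simpa using hη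
  have H1 := hineq t ht (x + ε • α) htt (by rw [hnrm, abs_of_pos hεpos]; exact hsmall)
  have H2 := hineq t ht (x + (-ε) • α) htt
    (by rw [hnrm, abs_neg, abs_of_pos hεpos]; exact hsmall)
  rw [key, hnrm, hsub, real_inner_smul_right, abs_of_pos hεpos] at H1
  rw [key, hnrm, hsub, real_inner_smul_right, abs_neg, abs_of_pos hεpos] at H2
  simp only [sub_self, abs_zero, add_zero, mul_zero, sub_zero] at H1 H2
  nlinarith [sq_nonneg ‖α‖, mul_pos hεpos hαpos, mul_pos hGpos hαpos]
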